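/- Let μ = Σᵢ aᵢ δ_{xᵢ} and ν = Σⱼ bⱼ δ_{yⱼ} be finite atomic measures with min_i aᵢ ≥ Σⱼ bⱼ. If T* ∈ Path(μ*, ν*) is a ROTPB(μ,ν) solution (0 < α < 1) and K is a connected component of spt(T*) containing two distinct source points x₁, x₂, then both x₁ and x₂ lie in the exception set P = {x_i : μ*({x_i}) < μ({x_i})} ∪ {y_j : ν*({y_j}) < ν({y_j})}. Combined with the fact that each connected component of spt(T*) contains at most one element of P, each connected component of spt(T*) contains exactly one source point. -/

import Mathlib

open MeasureTheory

/-- `μ = Σᵢ aᵢ δ_{xᵢ}`, `ν = Σⱼ bⱼ δ_{yⱼ}` finite atomic with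
`min aᵢ ≥ Σ bⱼ`; `T* ∈ Path(μ*,ν*)` a ROTPB solution; `K` a connected component of
`spt T*` containing two source points `x_{i1}, x_{i2}` with positive `μ*`-mass. Then both
lie in the exception set `P = {x : μ*{x} < μ{x}} ∪ {y : ν*{y} < ν{y}}`; combined with
the at-most-one-exception property of `K`, they must coincide (so each connected
component contains exactly one source point). -/
theorem stmt15 {X : Type*} [MeasurableSpace X] [MeasurableSingletonClass X]
    {ι κ : Type*} (s : Finset ι) (t : Finset κ)
    (x : ι → X) (y : κ → X) (a : ι → ENNReal) (b : κ → ENNReal)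
    (μ ν μs νs : Measure X) [IsFiniteMeasure μ] [IsFiniteMeasure ν]
    (hμ : μ = ∑ i ∈ s, a i • Measure.dirac (x i))
    (hν : ν = ∑ j ∈ t, b j • Measure.dirac (y j))
    (hxinj : Set.InjOn x s)
    (hbig : ∀ i ∈ s, ∑ j ∈ t, b j ≤ a i)
    (hμs : μs ≤ μ) (hνs : νs ≤ ν) (hmass : μs Set.univ = νs Set.univ)
    (K P : Set X)
    (hP : P = {p | μs {p} < μ {p}} ∪ {p | νs {p} < ν {p}})
    (hAtMostOne : ∀ p ∈ P ∩ K, ∀ q ∈ P ∩ K, p = q)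
    (i1 i2 : ι) (hi1 : i1 ∈ s) (hi2 : i2 ∈ s)
    (hx1K : x i1 ∈ K) (hx2K : x i2 ∈ K) (hne : x i1 ≠ x i2)
    (hpos1 : 0 < μs {x i1}) (hpos2 : 0 < μs {x i2}) :
    x i1 ∈ P ∧ x i2 ∈ P ∧ x i1 = x i2 := by
  -- ν univ = Σ b j
  have hνuniv : ν Set.univ = ∑ j ∈ t, b j := by
    simp [hν, Measure.finset_sum_apply, Measure.smul_apply]
  -- sum of two masses ≤ νs univ
  have hsum2 : μs {x i1} + μs {x i2} ≤ μs Set.univ := by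
    have := measure_union (μ := μs) (Set.disjoint_singleton.mpr hne)
      (measurableSet_singleton (x i2))
    calc μs {x i1} + μs {x i2} = μs ({x i1} ∪ {x i2}) := this.symm
      _ ≤ μs Set.univ := measure_mono (Set.subset_univ _)
  have hchain : ∀ i ∈ s, μs {x i1} + μs {x i2} ≤ μ {x i} := by
    intro i hi
    have h1 : νs Set.univ ≤ ν Set.univ := hνs _
    have h2 : a i ≤ μ {x i} := by
      rw [hμ]
      rw [Measure.finset_sum_apply]
      have : a i • Measure.dirac (x i) {x i} = a i := by
        simp [Measure.smul_apply]
      calc a i = a i • Measure.dirac (x i) {x i} := this.symm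
        _ ≤ ∑ k ∈ s, a k • Measure.dirac (x k) {x i} :=
          Finset.single_le_sum (f := fun k => (a k • Measure.dirac (x k)) {x i}) (fun k _ => zero_le) hi
    calc μs {x i1} + μs {x i2} ≤ μs Set.univ := hsum2
      _ = νs Set.univ := hmass
      _ ≤ ν Set.univ := h1
      _ = ∑ j ∈ t, b j := hνuniv
      _ ≤ a i := hbig i hi
      _ ≤ μ {x i} := h2
  have hfin : ∀ i : ι, μs {x i} ≠ ⊤ := fun i =>
    ne_top_of_le_ne_top (measure_ne_top μ _) (hμs _)
  have hm1 : μs {x i1} < μ {x i1} :=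
    lt_of_lt_of_le (ENNReal.lt_add_right (hfin i1) hpos2.ne') (hchain i1 hi1)
  have hm2 : μs {x i2} < μ {x i2} := by
    refine lt_of_lt_of_le ?_ (hchain i2 hi2)
    calc μs {x i2} < μs {x i2} + μs {x i1} :=
          ENNReal.lt_add_right (hfin i2) hpos1.ne'
      _ = μs {x i1} + μs {x i2} := add_comm _ _
  have hP1 : x i1 ∈ P := by rw [hP]; exact Or.inl hm1
  have hP2 : x i2 ∈ P := by rw [hP]; exact Or.inl hm2
  exact ⟨hP1, hP2, hAtMostOne _ ⟨hP1, hx1K⟩ _ ⟨hP2, hx2K⟩⟩
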